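/- Let u, v ∈ V be vertices of the whirl graph with u < v in ℚ, and let n > 1 be an integer with u, v ∈ V_{n−1}. If P ⊆ G_{≥n} is any u–v path, then V_{n−1} ∩ [u, v] ⊆ V(P) ⊆ V ∩ [u, v], and P traverses the vertices in V_{n−1} ∩ [u, v] in the natural order induced by ℚ. -/

import Mathlib

open SimpleGraph

/-- The `n`-th vertex level of the whirl graph: `V_n = {i/3^n : 0 ≤ i ≤ 3^n}`. -/
def Vn (n : ℕ) : Set ℚ := {q | ∃ i : ℕ, i ≤ 3 ^ n ∧ q = (i : ℚ) / 3 ^ n}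

/-- The `n`-th edge level of the whirl graph. -/
def En (n : ℕ) : Set (Sym2 ℚ) :=
  {e | ∃ k : ℕ, k < 3 ^ (n - 1) ∧
    (e = s(((3 * k : ℕ) : ℚ) / 3 ^ n, ((3 * k + 2 : ℕ) : ℚ) / 3 ^ n) ∨
     e = s(((3 * k + 1 : ℕ) : ℚ) / 3 ^ n, ((3 * k + 2 : ℕ) : ℚ) / 3 ^ n) ∨
     e = s(((3 * k + 1 : ℕ) : ℚ) / 3 ^ n, ((3 * k + 3 : ℕ) : ℚ) / 3 ^ n))}

/-- The vertex set `V = ⋃_{n ≥ 1} V_n` of the whirl graph. -/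
def whirlV : Set ℚ := ⋃ n ≥ 1, Vn n

/-- The whirl graph `G`, as a simple graph on `ℚ` with edge set `⋃_{n ≥ 1} E_n`. -/
def whirl : SimpleGraph ℚ := fromEdgeSet (⋃ n ≥ 1, En n)

/-- `G_{≤ n} = (V_n, E_1 ∪ ⋯ ∪ E_n)`. -/
def Gle (n : ℕ) : SimpleGraph ℚ := fromEdgeSet (⋃ k ∈ Set.Icc 1 n, En k)

/-- `G_{≥ n} = (V, ⋃_{k ≥ n} E_k)`. -/
def Gge (n : ℕ) : SimpleGraph ℚ := fromEdgeSet (⋃ k ≥ n, En k)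

/-- Two walks are edge-disjoint if they share no edge. -/
def WalkEdgeDisjoint {V : Type*} {G : SimpleGraph V} {u v : V}
    (p q : G.Walk u v) : Prop :=
  ∀ e, e ∈ p.edges → e ∉ q.edges

/-- Two lists (of supports of paths) traverse their common entries in the same order. -/
def ListCompat {α : Type*} [DecidableEq α] (l₁ l₂ : List α) : Prop :=
  ∀ x y, x ∈ l₁ → y ∈ l₁ → x ∈ l₂ → y ∈ l₂ →
    (l₁.idxOf x ≤ l₁.idxOf y ↔ l₂.idxOf x ≤ l₂.idxOf y)

lemma nat_div_mono {a b M : ℕ} (h : a ≤ b) : (a:ℚ)/3^M ≤ (b:ℚ)/3^M := by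
  have : (a:ℚ) ≤ b := by exact_mod_cast h
  gcongr

lemma edge_mem {n : ℕ} (hn : 1 < n) {x y : ℚ} (h : (Gge n).Adj x y) :
    x ∈ whirlV ∧ y ∈ whirlV ∧ ∃ j : ℕ, j < 3^(n-1) ∧
      (j:ℚ)/3^(n-1) ≤ x ∧ x ≤ ((j+1:ℕ):ℚ)/3^(n-1) ∧
      (j:ℚ)/3^(n-1) ≤ y ∧ y ≤ ((j+1:ℕ):ℚ)/3^(n-1) := by
  rw [Gge, fromEdgeSet_adj] at h
  obtain ⟨hmem, -⟩ := h
  simp only [Set.mem_iUnion] at hmem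
  obtain ⟨m, hm, hEn⟩ := hmem
  obtain ⟨k, hk, hcase⟩ := hEn
  -- extract numerators
  have key : ∃ a b : ℕ, 3*k ≤ a ∧ a ≤ 3*k+3 ∧ 3*k ≤ b ∧ b ≤ 3*k+3 ∧
      x = (a:ℚ)/3^m ∧ y = (b:ℚ)/3^m := by
    rcases hcase with hc | hc | hc <;> rw [Sym2.eq_iff] at hc <;>
      rcases hc with ⟨h1, h2⟩ | ⟨h1, h2⟩
    · exact ⟨3*k, 3*k+2, by omega, by omega, by omega, by omega, h1, h2⟩
    · exact ⟨3*k+2, 3*k, by omega, by omega, by omega, by omega, h1, h2⟩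
    · exact ⟨3*k+1, 3*k+2, by omega, by omega, by omega, by omega, h1, h2⟩
    · exact ⟨3*k+2, 3*k+1, by omega, by omega, by omega, by omega, h1, h2⟩
    · exact ⟨3*k+1, 3*k+3, by omega, by omega, by omega, by omega, h1, h2⟩
    · exact ⟨3*k+3, 3*k+1, by omega, by omega, by omega, by omega, h1, h2⟩
  obtain ⟨a, b, ha1, ha2, hb1, hb2, hx, hy⟩ := key
  obtain ⟨m', rfl⟩ : ∃ m', m = m' + 1 := ⟨m - 1, by omega⟩
  obtain ⟨n', rfl⟩ : ∃ n', n = n' + 1 := ⟨n - 1, by omega⟩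
  simp only [Nat.add_sub_cancel] at hk ⊢
  obtain ⟨d, hd⟩ : ∃ d, m' = n' + d := ⟨m' - n', by omega⟩
  subst hd
  have h3 : (0:ℕ) < 3^d := Nat.pow_pos (by norm_num)
  have hwx : x ∈ whirlV := by
    refine Set.mem_iUnion₂.2 ⟨n'+d+1, by omega, a, ?_, hx⟩
    have : 3 * k + 3 ≤ 3 ^ (n'+d+1) := by
      have : k + 1 ≤ 3 ^ (n'+d) := by
        have := pow_add 3 n' d
        omega
      calc 3*k+3 = 3*(k+1) := by ring
      _ ≤ 3*3^(n'+d) := by omega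
      _ = 3^(n'+d+1) := by rw [pow_succ]; ring
    omega
  have hwy : y ∈ whirlV := by
    refine Set.mem_iUnion₂.2 ⟨n'+d+1, by omega, b, ?_, hy⟩
    have : 3 * k + 3 ≤ 3 ^ (n'+d+1) := by
      have : k + 1 ≤ 3 ^ (n'+d) := by
        have := pow_add 3 n' d
        omega
      calc 3*k+3 = 3*(k+1) := by ring
      _ ≤ 3*3^(n'+d) := by omega
      _ = 3^(n'+d+1) := by rw [pow_succ]; ring
    omega
  have e1 : k / 3^d * 3^d ≤ k := Nat.div_mul_le_self k (3^d)
  have e2 : k < k / 3^d * 3^d + 3^d := Nat.lt_div_mul_add h3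
  have key2 : ∀ c : ℕ, 3*k ≤ c → c ≤ 3*k+3 →
      ((k/3^d : ℕ):ℚ)/3^n' ≤ (c:ℚ)/3^(n'+d+1) ∧
      (c:ℚ)/3^(n'+d+1) ≤ ((k/3^d+1 : ℕ):ℚ)/3^n' := by
    intro c hc1 hc2
    have h1n : (k/3^d) * 3^(d+1) ≤ c := by
      calc (k/3^d) * 3^(d+1) = (k/3^d*3^d)*3 := by rw [pow_succ]; ring
      _ ≤ k*3 := by omega
      _ ≤ c := by omega
    have h2n : c ≤ (k/3^d+1) * 3^(d+1) := by
      calc c ≤ (k+1)*3 := by omega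
      _ ≤ (k/3^d*3^d + 3^d)*3 := by omega
      _ = (k/3^d+1)*3^(d+1) := by rw [pow_succ]; ring
    have hq : ((3:ℚ))^(n'+d+1) = 3^n' * 3^(d+1) := by rw [← pow_add]; ring_nf
    have h3q : (0:ℚ) < 3^n' := by positivity
    have c1 : ((k/3^d : ℕ):ℚ) * 3^(d+1) ≤ (c:ℚ) := by exact_mod_cast h1n
    have c2 : (c:ℚ) ≤ ((k/3^d+1 : ℕ):ℚ) * 3^(d+1) := by exact_mod_cast h2n
    constructor
    · rw [div_le_div_iff₀ (by positivity) (by positivity), hq]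
      nlinarith
    · rw [div_le_div_iff₀ (by positivity) (by positivity), hq]
      nlinarith
  obtain ⟨hx1, hx2⟩ := key2 a ha1 ha2
  obtain ⟨hy1, hy2⟩ := key2 b hb1 hb2
  rw [← hx] at hx1 hx2
  rw [← hy] at hy1 hy2
  refine ⟨hwx, hwy, k / 3^d, ?_, hx1, hx2, hy1, hy2⟩
  · exact Nat.div_lt_iff_lt_mul h3 |>.2 (by have := pow_add 3 n' d; omega)

lemma adj_sep {n : ℕ} (hn : 1 < n) {x y w : ℚ} (h : (Gge n).Adj x y)
    (hw : w ∈ Vn (n-1)) : (x ≤ w ∧ y ≤ w) ∨ (w ≤ x ∧ w ≤ y) := by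
  obtain ⟨-, -, j, hj, hx1, hx2, hy1, hy2⟩ := edge_mem hn h
  obtain ⟨i, hi, rfl⟩ := hw
  rcases le_or_gt i j with hij | hij
  · right
    have : (i:ℚ)/3^(n-1) ≤ (j:ℚ)/3^(n-1) := nat_div_mono hij
    exact ⟨le_trans this hx1, le_trans this hy1⟩
  · left
    have : ((j+1:ℕ):ℚ)/3^(n-1) ≤ (i:ℚ)/3^(n-1) := nat_div_mono hij
    exact ⟨le_trans hx2 this, le_trans hy2 this⟩

lemma visit {n : ℕ} (hn : 1 < n) {x y : ℚ} (W : (Gge n).Walk x y) {w : ℚ}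
    (hw : w ∈ Vn (n-1)) (h1 : x ≤ w) (h2 : w ≤ y) : w ∈ W.support := by
  induction W with
  | nil => simp only [SimpleGraph.Walk.support_nil, List.mem_singleton]; linarith
  | @cons a b c h W ih =>
    rcases adj_sep hn h hw with ⟨-, hb⟩ | ⟨ha, -⟩
    · exact List.mem_cons_of_mem _ (ih hb h2)
    · have : w = a := le_antisymm ha h1
      simp [this]

lemma supp_whirl {n : ℕ} (hn : 1 < n) {x y : ℚ} (W : (Gge n).Walk x y)
    (hy : y ∈ whirlV) : ∀ z ∈ W.support, z ∈ whirlV := by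
  induction W with
  | nil => intro z hz; simp only [SimpleGraph.Walk.support_nil, List.mem_singleton] at hz; rwa [hz]
  | @cons a b c h W ih =>
    intro z hz
    rcases List.mem_cons.1 hz with rfl | hz
    · exact (edge_mem hn h).1
    · exact ih hy z hz


/-- Lemma 2.2: if `u < v` lie in `V_{n-1}` (`n > 1`) and `P` is a `u`–`v` path in `G_{≥n}`,
then `V_{n-1} ∩ [u,v] ⊆ V(P) ⊆ V ∩ [u,v]`, and `P` traverses the vertices of
`V_{n-1} ∩ [u,v]` in the natural order of `ℚ`. -/
theorem stmt6 (u v : ℚ) (hu : u ∈ whirlV) (hv : v ∈ whirlV) (huv : u < v)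
    (n : ℕ) (hn : 1 < n) (hun : u ∈ Vn (n - 1)) (hvn : v ∈ Vn (n - 1))
    (P : (Gge n).Walk u v) (hP : P.IsPath) :
    (∀ w ∈ Vn (n - 1) ∩ Set.Icc u v, w ∈ P.support) ∧
    (∀ w ∈ P.support, w ∈ whirlV ∩ Set.Icc u v) ∧
    (∀ x ∈ Vn (n - 1) ∩ Set.Icc u v, ∀ y ∈ Vn (n - 1) ∩ Set.Icc u v, x < y →
      P.support.idxOf x < P.support.idxOf y) := by
  classical
  refine ⟨?_, ?_, ?_⟩
  · rintro w ⟨hw, hw1, hw2⟩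
    exact visit hn P hw hw1 hw2
  · intro z hz
    refine ⟨supp_whirl hn P hv z hz, ?_, ?_⟩
    · by_contra hlt
      push_neg at hlt
      have hsplit : P.support =
          (P.takeUntil z hz).support ++ (P.dropUntil z hz).support.tail := by
        rw [← SimpleGraph.Walk.support_append, SimpleGraph.Walk.take_spec]
      have hnd := hP.support_nodup
      rw [hsplit, List.nodup_append] at hnd
      have hu1 : u ∈ (P.takeUntil z hz).support := SimpleGraph.Walk.start_mem_support _
      have hu2 : u ∈ (P.dropUntil z hz).support :=
        visit hn _ hun hlt.le huv.le
      rw [SimpleGraph.Walk.support_eq_cons] at hu2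
      rcases List.mem_cons.1 hu2 with rfl | hu2
      · exact absurd hlt (lt_irrefl _)
      · exact hnd.2.2 u hu1 u hu2 rfl
    · by_contra hlt
      push_neg at hlt
      have hsplit : P.support =
          (P.takeUntil z hz).support ++ (P.dropUntil z hz).support.tail := by
        rw [← SimpleGraph.Walk.support_append, SimpleGraph.Walk.take_spec]
      have hnd := hP.support_nodup
      rw [hsplit, List.nodup_append] at hnd
      have hv1 : v ∈ (P.takeUntil z hz).support :=
        visit hn _ hvn huv.le hlt.le
      have hv2 : v ∈ (P.dropUntil z hz).support := SimpleGraph.Walk.end_mem_support _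
      rw [SimpleGraph.Walk.support_eq_cons] at hv2
      rcases List.mem_cons.1 hv2 with rfl | hv2
      · exact absurd hlt (lt_irrefl _)
      · exact hnd.2.2 v hv1 v hv2 rfl
  · rintro x ⟨hxV, hx1, hx2⟩ y ⟨hyV, hy1, hy2⟩ hxy
    have hy' : y ∈ P.support := visit hn P hyV hy1 hy2
    set Q := P.takeUntil y hy' with hQ
    have hx' : x ∈ Q.support := visit hn Q hxV hx1 hxy.le
    have hsplit : P.support = Q.support ++ (P.dropUntil y hy').support.tail := by
      rw [← SimpleGraph.Walk.support_append, hQ, SimpleGraph.Walk.take_spec]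
    have h1 : Q.reverse.support = y :: Q.reverse.support.tail :=
      SimpleGraph.Walk.support_eq_cons _
    have hrev := congrArg List.reverse h1
    rw [SimpleGraph.Walk.support_reverse, List.reverse_reverse, List.reverse_cons] at hrev
    set l := Q.support.reverse.tail.reverse with hl
    have hQnd : Q.support.Nodup := (hP.takeUntil hy').support_nodup
    rw [hrev, List.nodup_append] at hQnd
    have hyl : y ∉ l := fun hyl => hQnd.2.2 y hyl y (List.mem_singleton_self y) rfl
    have hxl : x ∈ l := by
      rw [hrev] at hx'
      rcases List.mem_append.1 hx' with h | h
      · exact h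
      · exact absurd (List.mem_singleton.1 h) (ne_of_lt hxy)
    have hix : P.support.idxOf x = l.idxOf x := by
      rw [hsplit, List.idxOf_append_of_mem hx', hrev, List.idxOf_append_of_mem hxl]
    have hiy : P.support.idxOf y = l.length := by
      rw [hsplit, List.idxOf_append_of_mem (hrev ▸ SimpleGraph.Walk.end_mem_support Q),
        hrev, List.idxOf_append_of_notMem hyl, List.idxOf_cons_self, Nat.add_zero]
    rw [hix, hiy]
    exact List.idxOf_lt_length_iff.2 hxl
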